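/- In a normed plane, the unit circle is an affine regular hexagon if and only if there exist three pairwise non-parallel directions x, y, z with x ⊣_B y, y ⊣_B z, and z ⊣_B x. -/

import Mathlib

open Module

variable {V : Type*} [NormedAddCommGroup V] [NormedSpace ℝ V]

noncomputable def sine {V : Type*} [NormedAddCommGroup V] [NormedSpace ℝ V] (x y : V) : ℝ :=
  ⨅ t : ℝ, ‖x + t • y‖

def BOrth {V : Type*} [NormedAddCommGroup V] [NormedSpace ℝ V] (x y : V) : Prop :=
  ∀ t : ℝ, ‖x‖ ≤ ‖x + t • y‖

noncomputable def cD (V : Type*) [NormedAddCommGroup V] [NormedSpace ℝ V] : ℝ :=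
  sInf {r : ℝ | ∃ x y : V, ‖x‖ = 1 ∧ ‖y‖ = 1 ∧ BOrth x y ∧ r = sine y x}

noncomputable def cR (V : Type*) [NormedAddCommGroup V] [NormedSpace ℝ V] : ℝ :=
  sSup {r : ℝ | ∃ x y : V, ‖x‖ = 1 ∧ ‖y‖ = 1 ∧ r = |sine x y - sine y x|}

lemma bOrth_smul {x y : V} (h : BOrth x y) {a : ℝ} (ha : a ≠ 0) (b : ℝ) :
    BOrth (a • x) (b • y) := by
  intro t
  have key : a • x + t • b • y = a • (x + (t * b / a) • y) := by
    rw [smul_add, smul_smul, smul_smul, mul_div_cancel₀ _ ha]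
  rw [key, norm_smul, norm_smul]
  exact mul_le_mul_of_nonneg_left (h _) (norm_nonneg _)

lemma combo3_mem {s : Set V} (hs : Convex ℝ s) {p₁ p₂ p₃ : V} (h1 : p₁ ∈ s) (h2 : p₂ ∈ s)
    (h3 : p₃ ∈ s) {a b c : ℝ} (ha : 0 ≤ a) (hb : 0 ≤ b) (hc : 0 ≤ c) (habc : a + b + c = 1) :
    a • p₁ + b • p₂ + c • p₃ ∈ s := by
  have := hs.sum_mem (t := Finset.univ) (w := ![a,b,c]) (z := ![p₁,p₂,p₃])
    (by intro i _; fin_cases i <;> simpa)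
    (by simp [Fin.sum_univ_three, habc])
    (by intro i _; fin_cases i <;> simpa)
  simpa [Fin.sum_univ_three] using this

def hexSet (x y : V) : Set V := {x, -x, y, -y, x + y, -(x + y)}

lemma hexSet_swap (x y : V) : hexSet x y = hexSet y x := by
  unfold hexSet
  rw [add_comm]
  ext w; simp; tauto

lemma zero_mem_hex (x y : V) : (0 : V) ∈ convexHull ℝ (hexSet x y) := by
  have hx : x ∈ convexHull ℝ (hexSet x y) := subset_convexHull _ _ (by simp [hexSet])
  have hx' : -x ∈ convexHull ℝ (hexSet x y) := subset_convexHull _ _ (by simp [hexSet])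
  have := (convex_convexHull ℝ (hexSet x y)) hx hx'
    (by norm_num : (0:ℝ) ≤ 1/2) (by norm_num : (0:ℝ) ≤ 1/2) (by norm_num)
  simpa using this

/-- region A : 0 ≤ q ≤ p ≤ 1 -/
lemma hexA (x y : V) {p q : ℝ} (hq : 0 ≤ q) (hqp : q ≤ p) (hp : p ≤ 1) :
    p • x + q • y ∈ convexHull ℝ (hexSet x y) := by
  have h1 : x ∈ convexHull ℝ (hexSet x y) := subset_convexHull _ _ (by simp [hexSet])
  have h2 : x + y ∈ convexHull ℝ (hexSet x y) := subset_convexHull _ _ (by simp [hexSet])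
  have h3 := zero_mem_hex x y
  have := combo3_mem (convex_convexHull ℝ _) h1 h2 h3
    (a := p - q) (b := q) (c := 1 - p) (by linarith) hq (by linarith) (by ring)
  have e : (p - q) • x + q • (x + y) + (1 - p) • (0:V) = p • x + q • y := by
    simp [smul_add, sub_smul]; abel
  rwa [e] at this

/-- region A' : p ≤ q ≤ 0, -1 ≤ p -/
lemma hexA' (x y : V) {p q : ℝ} (hq : q ≤ 0) (hpq : p ≤ q) (hp : -1 ≤ p) :
    p • x + q • y ∈ convexHull ℝ (hexSet x y) := by
  have h1 : -x ∈ convexHull ℝ (hexSet x y) := subset_convexHull _ _ (by simp [hexSet])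
  have h2 : -(x + y) ∈ convexHull ℝ (hexSet x y) := subset_convexHull _ _ (by simp [hexSet])
  have h3 := zero_mem_hex x y
  have := combo3_mem (convex_convexHull ℝ _) h1 h2 h3
    (a := q - p) (b := -q) (c := 1 + p) (by linarith) (by linarith) (by linarith) (by ring)
  have e : (q - p) • (-x) + (-q) • (-(x + y)) + (1 + p) • (0:V) = p • x + q • y := by
    simp [smul_add, sub_smul, neg_smul]
  rwa [e] at this

/-- region C : q ≤ 0 ≤ p, p - q ≤ 1 -/
lemma hexC (x y : V) {p q : ℝ} (hp : 0 ≤ p) (hq : q ≤ 0) (hpq : p - q ≤ 1) :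
    p • x + q • y ∈ convexHull ℝ (hexSet x y) := by
  have h1 : x ∈ convexHull ℝ (hexSet x y) := subset_convexHull _ _ (by simp [hexSet])
  have h2 : -y ∈ convexHull ℝ (hexSet x y) := subset_convexHull _ _ (by simp [hexSet])
  have h3 := zero_mem_hex x y
  have := combo3_mem (convex_convexHull ℝ _) h1 h2 h3
    (a := p) (b := -q) (c := 1 - p + q) hp (by linarith) (by linarith) (by ring)
  have e : p • x + (-q) • (-y) + (1 - p + q) • (0:V) = p • x + q • y := by
    simp [neg_smul]
  rwa [e] at this

lemma hex_mem (x y : V) {p q : ℝ} (hp : |p| ≤ 1) (hq : |q| ≤ 1) (hpq : |p - q| ≤ 1) :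
    p • x + q • y ∈ convexHull ℝ (hexSet x y) := by
  rw [abs_le] at hp hq hpq
  have swap : q • y + p • x ∈ convexHull ℝ (hexSet y x) →
      p • x + q • y ∈ convexHull ℝ (hexSet x y) := by
    rw [hexSet_swap x y, add_comm]; exact id
  rcases le_total 0 p with hp0 | hp0 <;> rcases le_total 0 q with hq0 | hq0
  · rcases le_total q p with h | h
    · exact hexA x y hq0 h hp.2
    · exact swap (hexA y x hp0 h hq.2)
  · exact hexC x y hp0 hq0 hpq.2
  · exact swap (hexC y x hq0 hp0 (by linarith))
  · rcases le_total p q with h | h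
    · exact hexA' x y hq0 h hp.1
    · exact swap (hexA' y x hp0 h hq.1)

lemma abs_le_norm_of_bOrth {e f : V} (he : ‖e‖ = 1) (h : BOrth e f) (c d : ℝ) :
    |c| ≤ ‖c • e + d • f‖ := by
  rcases eq_or_ne c 0 with rfl | hc
  · simp [norm_nonneg]
  · have key : c • e + d • f = c • (e + (d / c) • f) := by
      rw [smul_add, smul_smul, mul_div_cancel₀ _ hc]
    rw [key, norm_smul, Real.norm_eq_abs]
    calc |c| = |c| * ‖e‖ := by rw [he, mul_one]
    _ ≤ |c| * ‖e + (d / c) • f‖ := by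
        exact mul_le_mul_of_nonneg_left (h (d / c)) (abs_nonneg c)

lemma hull_eq_ball (hV : finrank ℝ V = 2) {x y : V} (hx : ‖x‖ = 1) (hy : ‖y‖ = 1)
    (hz : ‖x + y‖ = 1) (hxy : BOrth x y) (hyz : BOrth y (x + y)) (hzx : BOrth (x + y) x)
    (hli : LinearIndependent ℝ ![x, y]) :
    convexHull ℝ (hexSet x y) = Metric.closedBall (0 : V) 1 := by
  apply le_antisymm
  · apply convexHull_min _ (convex_closedBall _ _)
    intro w hw
    rw [Metric.mem_closedBall, dist_zero_right]
    rcases hw with rfl | rfl | rfl | rfl | rfl | rfl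
    · simp [hx]
    · simp [hx]
    · simp [hy]
    · simp [hy]
    · simp [hz]
    · rw [norm_neg, hz]
  · intro w hw
    rw [Metric.mem_closedBall, dist_zero_right] at hw
    let B := basisOfLinearIndependentOfCardEqFinrank hli (by simp [hV])
    have hB0 : B 0 = x := by
      simp [B, coe_basisOfLinearIndependentOfCardEqFinrank]
    have hB1 : B 1 = y := by
      simp [B, coe_basisOfLinearIndependentOfCardEqFinrank]
    set p := B.repr w 0 with hp
    set q := B.repr w 1 with hq
    have hrepr : w = p • x + q • y := by
      conv_lhs => rw [← B.sum_repr w]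
      rw [Fin.sum_univ_two, hB0, hB1]
    have h1 : |p| ≤ ‖w‖ := by
      rw [hrepr]; exact abs_le_norm_of_bOrth hx hxy p q
    have h2 : |q| ≤ ‖w‖ := by
      have e : w = q • (x + y) + (p - q) • x := by
        rw [hrepr, smul_add, sub_smul]; abel
      rw [e]; exact abs_le_norm_of_bOrth hz hzx q (p - q)
    have h3 : |p - q| ≤ ‖w‖ := by
      have e : w = (q - p) • y + p • (x + y) := by
        rw [hrepr, smul_add, sub_smul]; abel
      rw [← abs_neg, neg_sub, e]
      exact abs_le_norm_of_bOrth hy hyz (q - p) p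
    rw [hrepr]
    exact hex_mem x y (h1.trans hw) (h2.trans hw) (h3.trans hw)

lemma sphere_eq_frontier (hV : finrank ℝ V = 2) {x y : V} (hx : ‖x‖ = 1) (hy : ‖y‖ = 1)
    (hz : ‖x + y‖ = 1) (hxy : BOrth x y) (hyz : BOrth y (x + y)) (hzx : BOrth (x + y) x)
    (hli : LinearIndependent ℝ ![x, y]) :
    {w : V | ‖w‖ = 1} = frontier (convexHull ℝ (hexSet x y)) := by
  rw [hull_eq_ball hV hx hy hz hxy hyz hzx hli, frontier_closedBall _ (one_ne_zero)]
  ext w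
  simp [Metric.mem_sphere, dist_zero_right]

lemma hexSet_finite (x y : V) : (hexSet x y).Finite := by
  unfold hexSet
  exact (((((Set.finite_singleton _).insert _).insert _).insert _).insert _).insert _

lemma fbound {u v : V} (hS : {w : V | ‖w‖ = 1} = frontier (convexHull ℝ (hexSet u v)))
    (f : V →ₗ[ℝ] ℝ) (hf : ∀ p ∈ hexSet u v, |f p| ≤ 1) (w : V) : |f w| ≤ ‖w‖ := by
  have hPc : IsClosed (convexHull ℝ (hexSet u v)) :=
    ((hexSet_finite u v).isCompact_convexHull (𝕜 := ℝ)).isClosed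
  have hsub : convexHull ℝ (hexSet u v) ⊆ {p : V | f p ≤ 1} ∩ {p : V | (-1:ℝ) ≤ f p} :=
    convexHull_min
      (fun p hp => ⟨(abs_le.1 (hf p hp)).2, (abs_le.1 (hf p hp)).1⟩)
      ((convex_halfSpace_le f.isLinear 1).inter (convex_halfSpace_ge f.isLinear (-1)))
  rcases eq_or_ne w 0 with rfl | hw
  · simp
  · have hwpos : (0:ℝ) < ‖w‖ := norm_pos_iff.2 hw
    have h1 : ‖(‖w‖ : ℝ)⁻¹ • w‖ = 1 := by
      rw [norm_smul, norm_inv, norm_norm, inv_mul_cancel₀ (norm_ne_zero_iff.2 hw)]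
    have h2 : (‖w‖ : ℝ)⁻¹ • w ∈ frontier (convexHull ℝ (hexSet u v)) := hS ▸ h1
    have h2' : (‖w‖ : ℝ)⁻¹ • w ∈ closure (convexHull ℝ (hexSet u v)) :=
      frontier_subset_closure h2
    rw [hPc.closure_eq] at h2'
    have h3 : |f ((‖w‖ : ℝ)⁻¹ • w)| ≤ 1 := abs_le.2 ⟨(hsub h2').2, (hsub h2').1⟩
    rw [map_smul, smul_eq_mul, abs_mul, abs_inv, abs_norm] at h3
    calc |f w| = ‖w‖ * (‖w‖⁻¹ * |f w|) := by field_simp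
    _ ≤ ‖w‖ * 1 := mul_le_mul_of_nonneg_left h3 (le_of_lt hwpos)
    _ = ‖w‖ := mul_one _

lemma forward_dir (hV : finrank ℝ V = 2) (u v : V) (hli : LinearIndependent ℝ ![u, v])
    (hu : ‖u‖ = 1) (hv : ‖v‖ = 1)
    (hS : {w : V | ‖w‖ = 1} = frontier (convexHull ℝ (hexSet u v))) :
    BOrth u (u + v) ∧ BOrth (u + v) v ∧ BOrth v u := by
  have hpair := LinearIndependent.pair_iff.1 hli
  have huv0 : u + v ≠ 0 := by
    intro h
    have := hpair 1 1 (by simpa using h)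
    norm_num at this
  let B := basisOfLinearIndependentOfCardEqFinrank hli (by simp [hV])
  have hB0 : B 0 = u := by
    simp [B, coe_basisOfLinearIndependentOfCardEqFinrank]
  have hB1 : B 1 = v := by
    simp [B, coe_basisOfLinearIndependentOfCardEqFinrank]
  have cu0 : B.repr u 0 = 1 := by rw [← hB0]; simp
  have cu1 : B.repr u 1 = 0 := by rw [← hB0]; simp
  have cv0 : B.repr v 0 = 0 := by rw [← hB1]; simp
  have cv1 : B.repr v 1 = 1 := by rw [← hB1]; simp
  have hP4 : convexHull ℝ (hexSet u v) ⊆ {w : V | (B.coord 0 + B.coord 1) w ≤ 2} := by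
    apply convexHull_min _ (convex_halfSpace_le (B.coord 0 + B.coord 1).isLinear 2)
    intro p hp
    rcases hp with rfl | rfl | rfl | rfl | rfl | rfl <;>
      simp [Basis.coord_apply, Finsupp.add_apply, cu0, cu1, cv0, cv1] <;> norm_num
  have hPc : IsClosed (convexHull ℝ (hexSet u v)) :=
    ((hexSet_finite u v).isCompact_convexHull (𝕜 := ℝ)).isClosed
  have hnotint : u + v ∉ interior (convexHull ℝ (hexSet u v)) := by
    intro hint
    rcases Metric.mem_nhds_iff.1 (mem_interior_iff_mem_nhds.1 hint) with ⟨ε, hε, hball⟩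
    have hnv : (0:ℝ) < ‖u + v‖ := norm_pos_iff.2 huv0
    set δ := ε / (2 * ‖u + v‖) with hδ
    have hδpos : 0 < δ := by positivity
    have hmem : (1 + δ) • (u + v) ∈ Metric.ball (u + v) ε := by
      rw [Metric.mem_ball, dist_eq_norm]
      have h' : (1 + δ) • (u + v) - (u + v) = δ • (u + v) := by
        rw [add_smul, one_smul]; abel
      rw [h', norm_smul, Real.norm_eq_abs, abs_of_pos hδpos, hδ]
      have he : ε / (2 * ‖u + v‖) * ‖u + v‖ = ε / 2 := by
        field_simp
      rw [he]; linarith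
    have := hP4 (hball hmem)
    simp only [Set.mem_setOf_eq, LinearMap.add_apply, Basis.coord_apply, map_smul, map_add,
      Finsupp.smul_apply, Finsupp.add_apply, cu0, cu1, cv0, cv1, smul_eq_mul] at this
    nlinarith
  have huvP : u + v ∈ convexHull ℝ (hexSet u v) :=
    subset_convexHull _ _ (by simp [hexSet])
  have huvfr : u + v ∈ frontier (convexHull ℝ (hexSet u v)) := by
    rw [hPc.frontier_eq]; exact ⟨huvP, hnotint⟩
  rw [← hS] at huvfr
  have hz : ‖u + v‖ = 1 := huvfr
  have bd1 : ∀ w : V, |(B.coord 0) w| ≤ ‖w‖ := by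
    apply fbound hS
    intro p hp
    rcases hp with rfl | rfl | rfl | rfl | rfl | rfl <;>
      simp [Basis.coord_apply, Finsupp.add_apply, cu0, cv0] <;> norm_num
  have bd2 : ∀ w : V, |(B.coord 1) w| ≤ ‖w‖ := by
    apply fbound hS
    intro p hp
    rcases hp with rfl | rfl | rfl | rfl | rfl | rfl <;>
      simp [Basis.coord_apply, Finsupp.add_apply, cu1, cv1] <;> norm_num
  have bd3 : ∀ w : V, |(B.coord 0 - B.coord 1) w| ≤ ‖w‖ := by
    apply fbound hS
    intro p hp
    rcases hp with rfl | rfl | rfl | rfl | rfl | rfl <;>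
      simp [Basis.coord_apply, Finsupp.add_apply, cu0, cu1, cv0, cv1] <;> norm_num
  refine ⟨?_, ?_, ?_⟩
  · intro t
    have hval : (B.coord 0 - B.coord 1) (u + t • (u + v)) = 1 := by
      simp [Basis.coord_apply, Finsupp.add_apply, Finsupp.smul_apply, cu0, cu1, cv0, cv1]
    have := bd3 (u + t • (u + v))
    rw [hval] at this
    rw [hu]; simpa using this
  · intro t
    have hval : (B.coord 0) (u + v + t • v) = 1 := by
      simp [Basis.coord_apply, Finsupp.add_apply, Finsupp.smul_apply, cu0, cv0]
    have := bd1 (u + v + t • v)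
    rw [hval] at this
    rw [hz]; simpa using this
  · intro t
    have hval : (B.coord 1) (v + t • u) = 1 := by
      simp [Basis.coord_apply, Finsupp.add_apply, Finsupp.smul_apply, cu1, cv1]
    have := bd2 (v + t • u)
    rw [hval] at this
    rw [hv]; simpa using this

lemma np_aux {p q : V} (h : ∀ c : ℝ, q ≠ c • p) {α β : ℝ} (hα : α ≠ 0) (hβ : β ≠ 0) :
    ∀ c : ℝ, β • q ≠ c • α • p := by
  intro c hc
  apply h (β⁻¹ * (c * α))
  calc q = β⁻¹ • β • q := by rw [smul_smul, inv_mul_cancel₀ hβ, one_smul]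
  _ = β⁻¹ • (c • α • p) := by rw [hc]
  _ = (β⁻¹ * (c * α)) • p := by rw [smul_smul, smul_smul, mul_assoc]

lemma normalize_cycle (hV : finrank ℝ V = 2) (x y z : V) (hx : x ≠ 0) (hy : y ≠ 0)
    (hz : z ≠ 0) (hyx : ∀ c : ℝ, y ≠ c • x) (hzy : ∀ c : ℝ, z ≠ c • y)
    (hzx : ∀ c : ℝ, z ≠ c • x) (h1 : BOrth x y) (h2 : BOrth y z) (h3 : BOrth z x) :
    ∃ u v : V, LinearIndependent ℝ ![u, v] ∧ ‖u‖ = 1 ∧ ‖v‖ = 1 ∧ ‖u + v‖ = 1 ∧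
      BOrth u v ∧ BOrth v (u + v) ∧ BOrth (u + v) u := by
  have hnx : (‖x‖ : ℝ) ≠ 0 := norm_ne_zero_iff.2 hx
  have hny : (‖y‖ : ℝ) ≠ 0 := norm_ne_zero_iff.2 hy
  have hnz : (‖z‖ : ℝ) ≠ 0 := norm_ne_zero_iff.2 hz
  set x₁ := (‖x‖ : ℝ)⁻¹ • x with hx₁
  set y₁ := (‖y‖ : ℝ)⁻¹ • y with hy₁
  set z₁ := (‖z‖ : ℝ)⁻¹ • z with hz₁
  have hnx₁ : ‖x₁‖ = 1 := norm_smul_inv_norm hx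
  have hny₁ : ‖y₁‖ = 1 := norm_smul_inv_norm hy
  have hnz₁ : ‖z₁‖ = 1 := norm_smul_inv_norm hz
  have hx₁0 : x₁ ≠ 0 := by rw [← norm_ne_zero_iff, hnx₁]; norm_num
  have hy₁0 : y₁ ≠ 0 := by rw [← norm_ne_zero_iff, hny₁]; norm_num
  have h1' : BOrth x₁ y₁ := bOrth_smul h1 (inv_ne_zero hnx) _
  have h2' : BOrth y₁ z₁ := bOrth_smul h2 (inv_ne_zero hny) _
  have h3' : BOrth z₁ x₁ := bOrth_smul h3 (inv_ne_zero hnz) _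
  have hyx₁ : ∀ c : ℝ, y₁ ≠ c • x₁ := np_aux hyx (inv_ne_zero hnx) (inv_ne_zero hny)
  have hzy₁ : ∀ c : ℝ, z₁ ≠ c • y₁ := np_aux hzy (inv_ne_zero hny) (inv_ne_zero hnz)
  have hzx₁ : ∀ c : ℝ, z₁ ≠ c • x₁ := np_aux hzx (inv_ne_zero hnx) (inv_ne_zero hnz)
  clear_value x₁ y₁ z₁
  have hli₁ : LinearIndependent ℝ ![x₁, y₁] := by
    rw [linearIndependent_fin2]
    refine ⟨by simpa using hy₁0, ?_⟩
    intro c hc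
    simp only [Matrix.cons_val_one, Matrix.head_cons, Matrix.cons_val_zero] at hc
    rcases eq_or_ne c 0 with rfl | hc0
    · rw [zero_smul] at hc; exact hx₁0 hc.symm
    · apply hyx₁ c⁻¹
      rw [← hc, smul_smul, inv_mul_cancel₀ hc0, one_smul]
  let B := basisOfLinearIndependentOfCardEqFinrank hli₁ (by simp [hV])
  have hB0 : B 0 = x₁ := by simp [B, coe_basisOfLinearIndependentOfCardEqFinrank]
  have hB1 : B 1 = y₁ := by simp [B, coe_basisOfLinearIndependentOfCardEqFinrank]
  set a := B.repr z₁ 0 with ha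
  set b := B.repr z₁ 1 with hb
  have hrepr : z₁ = a • x₁ + b • y₁ := by
    conv_lhs => rw [← B.sum_repr z₁]
    rw [Fin.sum_univ_two, hB0, hB1]
  have ha0 : a ≠ 0 := by
    intro h0
    apply hzy₁ b
    rw [hrepr, h0, zero_smul, zero_add]
  have hb0 : b ≠ 0 := by
    intro h0
    apply hzx₁ a
    rw [hrepr, h0, zero_smul, add_zero]
  set u := (a / |a|) • x₁ with hu
  set v := (b / |b|) • y₁ with hv
  clear_value u v
  have hsa : a / |a| ≠ 0 := div_ne_zero ha0 (abs_ne_zero.2 ha0)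
  have hsb : b / |b| ≠ 0 := div_ne_zero hb0 (abs_ne_zero.2 hb0)
  have hnu : ‖u‖ = 1 := by
    rw [hu, norm_smul, Real.norm_eq_abs, abs_div, abs_abs, div_self (abs_ne_zero.2 ha0),
      one_mul, hnx₁]
  have hnv : ‖v‖ = 1 := by
    rw [hv, norm_smul, Real.norm_eq_abs, abs_div, abs_abs, div_self (abs_ne_zero.2 hb0),
      one_mul, hny₁]
  have hzuv : z₁ = |a| • u + |b| • v := by
    have e1 : |a| * (a / |a|) = a := by field_simp
    have e2 : |b| * (b / |b|) = b := by field_simp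
    rw [hrepr, hu, hv, smul_smul, smul_smul, e1, e2]
  have hA : (0:ℝ) < |a| := abs_pos.2 ha0
  have hB' : (0:ℝ) < |b| := abs_pos.2 hb0
  have huv : BOrth u v := by
    rw [hu, hv]; exact bOrth_smul h1' hsa _
  have hvz : BOrth v z₁ := by
    rw [hv]
    simpa using bOrth_smul h2' hsb 1
  have hzu : BOrth z₁ u := by
    rw [hu]
    simpa using bOrth_smul h3' one_ne_zero (a / |a|)
  have ineq1 : |a| ≤ 1 := by
    have hle := huv (|b| / |a|)
    have e : u + (|b| / |a|) • v = |a|⁻¹ • z₁ := by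
      rw [hzuv]
      match_scalars <;> field_simp
    rw [e, norm_smul, Real.norm_eq_abs, abs_inv, abs_abs, hnz₁, mul_one, hnu] at hle
    have h5 : |a| * |a|⁻¹ = 1 := mul_inv_cancel₀ (ne_of_gt hA)
    nlinarith
  have ineq2 : 1 ≤ |b| := by
    have hle := hzu (-|a|)
    have e : z₁ + (-|a|) • u = |b| • v := by
      rw [hzuv, neg_smul]; abel
    rw [e, norm_smul, Real.norm_eq_abs, abs_abs, hnv, mul_one, hnz₁] at hle
    exact hle
  have ineq3 : |b| ≤ |a| := by
    have hle := hvz (-|b|⁻¹)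
    have e : v + (-|b|⁻¹) • z₁ = (-(|a| / |b|)) • u := by
      rw [hzuv]
      match_scalars <;> field_simp <;> ring
    rw [e, norm_smul, Real.norm_eq_abs, abs_neg, abs_div, abs_abs, abs_abs, hnu, mul_one,
      hnv] at hle
    rw [le_div_iff₀ hB'] at hle
    linarith
  have hA1 : |a| = 1 := le_antisymm ineq1 (le_trans ineq2 ineq3)
  have hB1' : |b| = 1 := le_antisymm (ineq3.trans ineq1) ineq2
  have hzuv' : z₁ = u + v := by rw [hzuv, hA1, hB1', one_smul, one_smul]
  refine ⟨u, v, ?_, hnu, hnv, by rw [← hzuv']; exact hnz₁, huv, by rwa [← hzuv'],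
    by rwa [← hzuv']⟩
  rw [LinearIndependent.pair_iff]
  intro s t hst
  have hst' := LinearIndependent.pair_iff.1 hli₁ (s * (a / |a|)) (t * (b / |b|)) (by
    rw [← smul_smul, ← smul_smul, ← hu, ← hv]; exact hst)
  constructor
  · rcases mul_eq_zero.1 hst'.1 with h | h
    · exact h
    · exact absurd h hsa
  · rcases mul_eq_zero.1 hst'.2 with h | h
    · exact h
    · exact absurd h hsb


theorem hexagon_iff_birkhoff_cycle (hV : finrank ℝ V = 2) :
    (∃ u v : V, LinearIndependent ℝ ![u, v] ∧ ‖u‖ = 1 ∧ ‖v‖ = 1 ∧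
      {w : V | ‖w‖ = 1} =
        frontier (convexHull ℝ ({u, -u, v, -v, u + v, -(u + v)} : Set V))) ↔
    (∃ x y z : V, x ≠ 0 ∧ y ≠ 0 ∧ z ≠ 0 ∧
      (∀ c : ℝ, y ≠ c • x) ∧ (∀ c : ℝ, z ≠ c • y) ∧ (∀ c : ℝ, z ≠ c • x) ∧
      BOrth x y ∧ BOrth y z ∧ BOrth z x) := by
  constructor
  · rintro ⟨u, v, hli, hu, hv, hS⟩
    have hpair := LinearIndependent.pair_iff.1 hli
    have hS' : {w : V | ‖w‖ = 1} = frontier (convexHull ℝ (hexSet u v)) := hS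
    obtain ⟨o1, o2, o3⟩ := forward_dir hV u v hli hu hv hS'
    refine ⟨u, u + v, v, ?_, ?_, ?_, ?_, ?_, ?_, o1, o2, o3⟩
    · intro h
      have := hpair 1 0 (by simp [h])
      norm_num at this
    · intro h
      have := hpair 1 1 (by simpa using h)
      norm_num at this
    · intro h
      have := hpair 0 1 (by simp [h])
      norm_num at this
    · intro c hc
      have := hpair (1 - c) 1 (by
        rw [sub_smul, one_smul, one_smul]
        rw [← sub_eq_zero] at hc
        calc u - c • u + v = u + v - c • u := by abel
        _ = 0 := hc)
      norm_num at this
    · intro c hc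
      have := hpair c (c - 1) (by
        have h' : c • u + c • v = v := by rw [← smul_add]; exact hc.symm
        rw [sub_smul, one_smul]
        calc c • u + (c • v - v) = c • u + c • v - v := by abel
        _ = 0 := by rw [h', sub_self])
      have h1 := this.1
      have h2 := this.2
      rw [h1] at h2
      norm_num at h2
    · intro c hc
      have := hpair c (-1) (by rw [neg_smul, one_smul, ← hc]; abel)
      norm_num at this
  · rintro ⟨x, y, z, hx, hy, hz, hyx, hzy, hzx, h1, h2, h3⟩
    obtain ⟨u, v, hli, hu, hv, huv, b1, b2, b3⟩ :=
      normalize_cycle hV x y z hx hy hz hyx hzy hzx h1 h2 h3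
    exact ⟨u, v, hli, hu, hv, sphere_eq_frontier hV hu hv huv b1 b2 b3 hli⟩
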